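/- Let k ≥ 1, let α₁, …, α_k be nonnegative reals with Σ_{i=1}^k α_i = 1, let μ₁, …, μ_k ∈ ℝ^d, and let Σ₁, …, Σ_k be d×d positive semidefinite matrices. Define the mixture mean μ = Σ_{i=1}^k α_i μ_i and the mixture covariance Σ = Σ_{i=1}^k α_i·(Σ_i + (μ_i − μ)(μ_i − μ)ᵀ) (this is the covariance matrix of the Gaussian mixture Σ_i α_i N(μ_i, Σ_i)). Then for every p ∈ {1,…,k}: α_p·Σ_p ⪯ Σ. Consequently, if Σ is positive definite and α_p > 0, then ‖Σ^{-1/2} Σ_p Σ^{-1/2}‖_op ≤ 1/α_p. -/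

import Mathlib

open Matrix MeasureTheory ProbabilityTheory

noncomputable section

namespace ListDecCov

/-- The positive semidefinite square root of a positive semidefinite matrix
(the former Mathlib definition `Matrix.PosSemidef.sqrt`, removed since). -/
def psdSqrt {n : Type*} [Fintype n] [DecidableEq n]
    {A : Matrix n n ℝ} (hA : A.PosSemidef) : Matrix n n ℝ :=
  hA.1.eigenvectorUnitary.1 * diagonal ((↑) ∘ Real.sqrt ∘ hA.1.eigenvalues) *
    (star hA.1.eigenvectorUnitary : Matrix n n ℝ)

/-- Frobenius norm of a square real matrix. -/
def frobNorm {d : ℕ} (M : Matrix (Fin d) (Fin d) ℝ) : ℝ :=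
  Real.sqrt (∑ i, ∑ j, (M i j) ^ 2)

/-- Operator (spectral) norm of a square real matrix. -/
def opNorm {d : ℕ} (M : Matrix (Fin d) (Fin d) ℝ) : ℝ :=
  ‖Matrix.toEuclideanCLM (𝕜 := ℝ) M‖

/-- Euclidean (ℓ²) norm of a vector. -/
def vecNorm {d : ℕ} (v : Fin d → ℝ) : ℝ :=
  Real.sqrt (∑ i, (v i) ^ 2)

/-- The four Penrose equations characterizing the Moore–Penrose pseudoinverse. -/
def IsMoorePenrose {d : ℕ} (H Hd : Matrix (Fin d) (Fin d) ℝ) : Prop :=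
  H * Hd * H = H ∧ Hd * H * Hd = Hd ∧ (H * Hd)ᵀ = H * Hd ∧ (Hd * H)ᵀ = Hd * H

/-- Average of `f` over a finite set. -/
def fAvg {X V : Type*} [AddCommMonoid V] [Module ℝ V] (A : Finset X) (f : X → V) : V :=
  (A.card : ℝ)⁻¹ • ∑ x ∈ A, f x

/-- Average of `f` over a multiset. -/
def msAvg {X V : Type*} [AddCommMonoid V] [Module ℝ V] (T : Multiset X) (f : X → V) : V :=
  (T.card : ℝ)⁻¹ • (T.map f).sum

/-- Empirical covariance matrix of `f x`, `x` ranging over a finite set. -/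
def fCov {X : Type*} {d : ℕ} (A : Finset X) (f : X → (Fin d → ℝ)) :
    Matrix (Fin d) (Fin d) ℝ :=
  fAvg A (fun x => Matrix.vecMulVec (f x) (f x)) - Matrix.vecMulVec (fAvg A f) (fAvg A f)

/-- Empirical covariance matrix of `f x`, `x` ranging over a multiset. -/
def msCov {X : Type*} {d : ℕ} (T : Multiset X) (f : X → (Fin d → ℝ)) :
    Matrix (Fin d) (Fin d) ℝ :=
  msAvg T (fun x => Matrix.vecMulVec (f x) (f x)) - Matrix.vecMulVec (msAvg T f) (msAvg T f)

/-- Empirical variance of `g x`, `x` ranging over a finite set. -/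
def fVar {X : Type*} (A : Finset X) (g : X → ℝ) : ℝ :=
  fAvg A fun x => (g x - fAvg A g) ^ 2

/-- Empirical variance of `g x`, `x` ranging over a multiset. -/
def msVar {X : Type*} (T : Multiset X) (g : X → ℝ) : ℝ :=
  msAvg T fun x => (g x - msAvg T g) ^ 2

/-- The `k`-th smallest element (1-indexed) of a multiset of reals. -/
def kthSmallest (s : Multiset ℝ) (k : ℕ) : ℝ :=
  (s.sort (· ≤ ·)).getD (k - 1) 0

/-- Median (the `⌈m/2⌉`-th smallest element) of a multiset of reals of size `m`. -/
def msMedian (s : Multiset ℝ) : ℝ :=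
  kthSmallest s ((Multiset.card s + 1) / 2)

/-- Conditions (L.1)–(L.2) of stability, with respect to mean `μ`, covariance `Sig`
(with psd square root `sqrtSig`) and parameter `ε`. -/
def SatisfiesL12 {d : ℕ} (μ : Fin d → ℝ) (Sig sqrtSig : Matrix (Fin d) (Fin d) ℝ) (ε : ℝ)
    (A : Finset (Fin d → ℝ)) : Prop :=
  ∀ A' ⊆ A, (1 - ε) * (A.card : ℝ) ≤ (A'.card : ℝ) →
    (∀ v : Fin d → ℝ,
        |fAvg A' (fun x => v ⬝ᵥ (x - μ))| ≤ 0.1 * Real.sqrt (v ⬝ᵥ Sig.mulVec v)) ∧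
    (∀ U : Matrix (Fin d) (Fin d) ℝ, U.IsSymm →
        |Matrix.trace ((fAvg A' (fun x => Matrix.vecMulVec (x - μ) (x - μ)) - Sig) * U)|
          ≤ 0.1 * frobNorm (sqrtSig * U * sqrtSig))

end ListDecCov

namespace ListDecCov

section Helpers
variable {d : ℕ}

private lemma psdSqrt_posSemidef {M : Matrix (Fin d) (Fin d) ℝ} (hM : M.PosSemidef) :
    (psdSqrt hM).PosSemidef := by
  unfold psdSqrt
  have hD : (diagonal ((↑) ∘ Real.sqrt ∘ hM.1.eigenvalues : Fin d → ℝ)).PosSemidef := by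
    rw [posSemidef_diagonal_iff]
    intro i
    simp [Real.sqrt_nonneg]
  have := hD.mul_mul_conjTranspose_same (hM.1.eigenvectorUnitary : Matrix (Fin d) (Fin d) ℝ)
  simpa [Matrix.star_eq_conjTranspose] using this

private lemma psdSqrt_mul_self {M : Matrix (Fin d) (Fin d) ℝ} (hM : M.PosSemidef) :
    psdSqrt hM * psdSqrt hM = M := by
  unfold psdSqrt
  set U : Matrix (Fin d) (Fin d) ℝ := hM.1.eigenvectorUnitary.1
  have hU : (star hM.1.eigenvectorUnitary : Matrix (Fin d) (Fin d) ℝ) * U = 1 :=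
    Unitary.coe_star_mul_self _
  calc U * diagonal ((↑) ∘ Real.sqrt ∘ hM.1.eigenvalues) *
        (star hM.1.eigenvectorUnitary : Matrix (Fin d) (Fin d) ℝ) *
        (U * diagonal ((↑) ∘ Real.sqrt ∘ hM.1.eigenvalues) *
        (star hM.1.eigenvectorUnitary : Matrix (Fin d) (Fin d) ℝ))
      = U * (diagonal ((↑) ∘ Real.sqrt ∘ hM.1.eigenvalues) *
          ((star hM.1.eigenvectorUnitary : Matrix (Fin d) (Fin d) ℝ) * U) *
          diagonal ((↑) ∘ Real.sqrt ∘ hM.1.eigenvalues)) *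
          (star hM.1.eigenvectorUnitary : Matrix (Fin d) (Fin d) ℝ) := by
        simp only [Matrix.mul_assoc]
    _ = U * diagonal (RCLike.ofReal ∘ hM.1.eigenvalues) *
          (star hM.1.eigenvectorUnitary : Matrix (Fin d) (Fin d) ℝ) := by
        rw [hU, Matrix.mul_one, diagonal_mul_diagonal]
        have hsq : ∀ i, √(hM.1.eigenvalues i) * √(hM.1.eigenvalues i) = hM.1.eigenvalues i :=
          fun i => Real.mul_self_sqrt (hM.eigenvalues_nonneg i)
        congr 2
        simp [hsq]
    _ = M := by
        conv_rhs => rw [hM.1.spectral_theorem, Unitary.conjStarAlgAut_apply]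

private lemma psd_smul {c : ℝ} {M : Matrix (Fin d) (Fin d) ℝ} (hc : 0 ≤ c) (hM : M.PosSemidef) :
    (c • M).PosSemidef := by
  exact hM.smul hc

private lemma opNorm_le_of_loewner {c : ℝ} (hc : 0 ≤ c) {M : Matrix (Fin d) (Fin d) ℝ}
    (hM : M.PosSemidef) (hle : (c • (1 : Matrix (Fin d) (Fin d) ℝ) - M).PosSemidef) :
    ‖Matrix.toEuclideanCLM (𝕜 := ℝ) M‖ ≤ c := by
  set N := psdSqrt hM with hNdef
  have hN := psdSqrt_posSemidef hM
  have hNN : N * N = M := psdSqrt_mul_self hM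
  have hNH : Nᴴ = N := hN.1
  have e : c ^ 2 • (1 : Matrix (Fin d) (Fin d) ℝ) - M * M
      = N * (c • 1 - M) * Nᴴ + c • (c • 1 - M) := by
    rw [hNH]
    have h1 : N * (c • 1 - M) * N = c • M - M * M := by
      rw [Matrix.mul_sub, Matrix.sub_mul, Matrix.mul_smul, Matrix.smul_mul, mul_one, hNN,
        ← hNN]
      simp [mul_assoc]
    rw [h1, smul_sub, smul_smul, pow_two]
    abel
  have hMM : (c ^ 2 • (1 : Matrix (Fin d) (Fin d) ℝ) - M * M).PosSemidef := by
    rw [e]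
    exact (hle.mul_mul_conjTranspose_same N).add (psd_smul hc hle)
  have quad : ∀ y : Fin d → ℝ, (M *ᵥ y) ⬝ᵥ (M *ᵥ y) ≤ c ^ 2 * (y ⬝ᵥ y) := by
    intro y
    have h0 := hMM.dotProduct_mulVec_nonneg y
    rw [star_trivial, Matrix.sub_mulVec, smul_mulVec, one_mulVec, dotProduct_sub,
      dotProduct_smul, sub_nonneg, ← mulVec_mulVec, dotProduct_mulVec (A := M)] at h0
    have hMT : Mᵀ = M := by
      rw [← Matrix.conjTranspose_eq_transpose_of_trivial, hM.1]
    have hvm : y ᵥ* M = M *ᵥ y := by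
      rw [← Matrix.mulVec_transpose, hMT]
    rwa [hvm, smul_eq_mul] at h0
  refine ContinuousLinearMap.opNorm_le_bound _ hc fun x => ?_
  have norm_symm : ∀ v : Fin d → ℝ,
      ‖(WithLp.equiv 2 (Fin d → ℝ)).symm v‖ = Real.sqrt (v ⬝ᵥ v) := by
    intro v
    rw [EuclideanSpace.norm_eq]
    congr 1
    simp [dotProduct, pow_two]
  set y : Fin d → ℝ := WithLp.equiv 2 _ x with hy
  have hxy : x = (WithLp.equiv 2 (Fin d → ℝ)).symm y := ((WithLp.equiv 2 _).symm_apply_apply x).symm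
  rw [hxy]
  change ‖(WithLp.equiv 2 (Fin d → ℝ)).symm (M *ᵥ y)‖ ≤ _
  rw [norm_symm, norm_symm]
  calc Real.sqrt ((M *ᵥ y) ⬝ᵥ (M *ᵥ y)) ≤ Real.sqrt (c ^ 2 * (y ⬝ᵥ y)) :=
        Real.sqrt_le_sqrt (quad y)
    _ = c * Real.sqrt (y ⬝ᵥ y) := by
        rw [Real.sqrt_mul (sq_nonneg c), Real.sqrt_sq hc]

private lemma psd_vecMulVec {d : ℕ} (v : Fin d → ℝ) : (Matrix.vecMulVec v v).PosSemidef := by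
  rw [Matrix.vecMulVec_eq (Fin 1), show Matrix.replicateCol (Fin 1) v = (Matrix.replicateRow (Fin 1) v)ᴴ by
    rw [Matrix.conjTranspose_replicateRow]; simp]
  exact Matrix.posSemidef_conjTranspose_mul_self _

private lemma psd_sum {d k : ℕ} (s : Finset (Fin k)) (f : Fin k → Matrix (Fin d) (Fin d) ℝ)
    (hf : ∀ i ∈ s, (f i).PosSemidef) : (∑ i ∈ s, f i).PosSemidef := by
  classical
  induction s using Finset.induction_on with
  | empty => simpa using Matrix.PosSemidef.zero
  | insert a s h ih =>
    rw [Finset.sum_insert h]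
    exact ((hf _ (Finset.mem_insert_self _ _)).add
      (ih fun i hi => hf i (Finset.mem_insert_of_mem hi)))

end Helpers

/-- for a mixture with weights `w i`, means `μs i`, covariances `Covs i`, the
mixture covariance dominates `w p • Covs p`; consequently, if the mixture covariance `Σ` is
positive definite and `w p > 0`, then `‖Σ^{-1/2} Σ_p Σ^{-1/2}‖_op ≤ 1/w p`. -/
theorem statement19 (d k : ℕ) (hk : 1 ≤ k) (w : Fin k → ℝ)
    (hw0 : ∀ i, 0 ≤ w i) (hw1 : ∑ i, w i = 1)
    (μs : Fin k → Fin d → ℝ) (Covs : Fin k → Matrix (Fin d) (Fin d) ℝ)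
    (hCovs : ∀ i, (Covs i).PosSemidef)
    (μ : Fin d → ℝ) (hμ : μ = ∑ i, w i • μs i)
    (Sig : Matrix (Fin d) (Fin d) ℝ)
    (hSig : Sig = ∑ i, w i • (Covs i + Matrix.vecMulVec (μs i - μ) (μs i - μ)))
    (p : Fin k) :
    (Sig - w p • Covs p).PosSemidef ∧
      ∀ (hpd : Sig.PosDef), 0 < w p →
        opNorm ((psdSqrt hpd.posSemidef)⁻¹ * Covs p * (psdSqrt hpd.posSemidef)⁻¹) ≤ 1 / w p := by
  classical
  have hR : ∀ i, (Matrix.vecMulVec (μs i - μ) (μs i - μ)).PosSemidef :=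
    fun i => psd_vecMulVec _
  have part1 : (Sig - w p • Covs p).PosSemidef := by
    have hrw : Sig - w p • Covs p =
        w p • Matrix.vecMulVec (μs p - μ) (μs p - μ) +
          ∑ i ∈ Finset.univ.erase p,
            w i • (Covs i + Matrix.vecMulVec (μs i - μ) (μs i - μ)) := by
      rw [hSig, ← Finset.add_sum_erase _ _ (Finset.mem_univ p), smul_add]
      abel
    rw [hrw]
    exact (psd_smul (hw0 p) (hR p)).add
      (psd_sum _ _ fun i _ => psd_smul (hw0 i) ((hCovs i).add (hR i)))
  refine ⟨part1, fun hpd hwp => ?_⟩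
  set S := psdSqrt hpd.posSemidef with hSdef
  have hS : S.PosSemidef := psdSqrt_posSemidef hpd.posSemidef
  have hSS : S * S = Sig := psdSqrt_mul_self hpd.posSemidef
  have hu : IsUnit S.det := by
    have hdet : S.det * S.det = Sig.det := by rw [← Matrix.det_mul, hSS]
    have : Sig.det ≠ 0 := ne_of_gt hpd.det_pos
    exact isUnit_iff_ne_zero.mpr fun h => this (by rw [← hdet, h, mul_zero])
  have hinv1 : S⁻¹ * S = 1 := Matrix.nonsing_inv_mul S hu
  have hinv2 : S * S⁻¹ = 1 := Matrix.mul_nonsing_inv S hu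
  have hinvH : (S⁻¹)ᴴ = S⁻¹ := by rw [Matrix.conjTranspose_nonsing_inv, hS.1]
  have hMps : (S⁻¹ * Covs p * S⁻¹).PosSemidef := by
    have := (hCovs p).mul_mul_conjTranspose_same S⁻¹
    rwa [hinvH] at this
  have hwpne : w p ≠ 0 := ne_of_gt hwp
  have key : (1 / w p) • (1 : Matrix (Fin d) (Fin d) ℝ) - S⁻¹ * Covs p * S⁻¹ =
      S⁻¹ * ((w p)⁻¹ • (Sig - w p • Covs p)) * (S⁻¹)ᴴ := by
    have hid : S⁻¹ * (S * S) * S⁻¹ = 1 := by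
      rw [← mul_assoc, hinv1, one_mul, hinv2]
    rw [hinvH, smul_sub, smul_smul, inv_mul_cancel₀ hwpne, one_smul, Matrix.mul_sub,
      Matrix.sub_mul, Matrix.mul_smul, Matrix.smul_mul, ← hSS, one_div, hid, mul_assoc]
  have hle : ((1 / w p) • (1 : Matrix (Fin d) (Fin d) ℝ) - S⁻¹ * Covs p * S⁻¹).PosSemidef := by
    rw [key]
    exact (psd_smul (inv_nonneg.mpr (le_of_lt hwp)) part1).mul_mul_conjTranspose_same S⁻¹
  exact opNorm_le_of_loewner (by positivity) hMps hle


end ListDecCov
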